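/- Let σ be a d-simplex in ℝ^d with vertices v₁,…,v_{d+1}, and let F be the facet opposite v₁. If a d-simplex τ shares F with σ and has disjoint interior from σ, then the vertex of τ not on F lies in the open halfspace bounded by the affine span of F not containing v₁. -/

import Mathlib

open Finset AffineMap

set_option maxHeartbeats 1000000

private lemma affineCombination_mem_of_mem {E : Type*} [AddCommGroup E] [Module ℝ E]
    {ι : Type*} (S : AffineSubspace ℝ E) (t : Finset ι) (p : ι → E) (wt : ι → ℝ)
    (h1 : ∑ i ∈ t, wt i = 1) (hp : ∀ i ∈ t, p i ∈ S) :
    t.affineCombination ℝ p wt ∈ S := by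
  classical
  have h2 : ∑ j : {x // x ∈ t}, wt j = 1 := by
    rw [← h1]
    exact (Finset.sum_subtype t (fun _ => Iff.rfl) wt).symm
  have hmem := affineCombination_mem_affineSpan (s := (Finset.univ : Finset {x // x ∈ t}))
    (w := fun j : {x // x ∈ t} => wt j) h2 (fun j => p j)
  have hle : affineSpan ℝ (Set.range fun j : {x // x ∈ t} => p (j : ι)) ≤ S := by
    rw [affineSpan_le]
    rintro x ⟨j, rfl⟩
    exact hp j j.2
  have heq : (Finset.univ.affineCombination ℝ (fun j : {x // x ∈ t} => p (j : ι))
      fun j => wt j) = t.affineCombination ℝ p wt := by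
    rw [Finset.affineCombination_eq_linear_combination _ _ _ h2,
        Finset.affineCombination_eq_linear_combination _ _ _ h1]
    exact (Finset.sum_subtype t (fun _ => Iff.rfl) (fun i => wt i • p i)).symm
  exact hle (heq ▸ hmem)

/-- If a `d`-simplex `τ` shares with the simplex `σ` (vertices `v`) the facet opposite
`v 0` and has interior disjoint from `σ`, then the remaining vertex of `τ` lies strictly
on the opposite side from `v 0` of the hyperplane spanned by that facet. -/
theorem opposite_side_of_shared_facet (d : ℕ)
    (v w : Fin (d + 1) → EuclideanSpace ℝ (Fin d))
    (hv : AffineIndependent ℝ v) (hw : AffineIndependent ℝ w)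
    (hshare : ∀ i : Fin (d + 1), i ≠ 0 → w i = v i)
    (hdisj : Disjoint (interior (convexHull ℝ (Set.range v)))
      (interior (convexHull ℝ (Set.range w)))) :
    (affineSpan ℝ (v '' {i : Fin (d + 1) | i ≠ 0})).SOppSide (w 0) (v 0) := by
  classical
  rcases Nat.eq_zero_or_pos d with rfl | hd
  · exfalso
    have h1 : (Set.range v) = Set.univ := Set.eq_univ_of_forall (fun x => ⟨0, Subsingleton.elim _ _⟩)
    have h2 : (Set.range w) = Set.univ := Set.eq_univ_of_forall (fun x => ⟨0, Subsingleton.elim _ _⟩)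
    rw [h1, h2, convexHull_univ, interior_univ] at hdisj
    exact Set.not_disjoint_iff.mpr ⟨v 0, Set.mem_univ _, Set.mem_univ _⟩ hdisj
  have hcard : Fintype.card (Fin (d + 1))
      = Module.finrank ℝ (EuclideanSpace ℝ (Fin d)) + 1 := by
    rw [Fintype.card_fin, finrank_euclideanSpace_fin]
  have hvtop : affineSpan ℝ (Set.range v) = ⊤ :=
    hv.affineSpan_eq_top_iff_card_eq_finrank_add_one.mpr hcard
  have hwtop : affineSpan ℝ (Set.range w) = ⊤ :=
    hw.affineSpan_eq_top_iff_card_eq_finrank_add_one.mpr hcard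
  set bv : AffineBasis (Fin (d + 1)) ℝ (EuclideanSpace ℝ (Fin d)) := ⟨v, hv, hvtop⟩ with hbv
  set bw : AffineBasis (Fin (d + 1)) ℝ (EuclideanSpace ℝ (Fin d)) := ⟨w, hw, hwtop⟩ with hbw
  have hbvc : ⇑bv = v := rfl
  have hbwc : ⇑bw = w := rfl
  set a : Fin (d + 1) → ℝ := fun i => bv.coord i (w 0) with ha
  have hsum : ∑ i, a i = 1 := bv.sum_coord_apply_eq_one (w 0)
  have hrep : Finset.univ.affineCombination ℝ v a = w 0 := by
    have := bv.affineCombination_coord_eq_self (w 0)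
    rwa [hbvc] at this
  have hlin : ∑ i, a i • v i = w 0 := by
    rw [← Finset.affineCombination_eq_linear_combination _ _ _ hsum, hrep]
  set T : Finset (Fin (d + 1)) := Finset.univ.erase 0 with hT
  have h0T : (0 : Fin (d + 1)) ∉ T := Finset.notMem_erase _ _
  have hmemT : ∀ i : Fin (d + 1), i ≠ 0 → i ∈ T := fun i hi =>
    Finset.mem_erase.mpr ⟨hi, Finset.mem_univ i⟩
  have hcardT : T.card = d := by
    rw [hT, Finset.card_erase_of_mem (Finset.mem_univ 0), Finset.card_univ, Fintype.card_fin]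
    omega
  have hTne : T.Nonempty := Finset.card_pos.mp (by omega)
  have hsplit : a 0 • v 0 + ∑ i ∈ T, a i • v i = w 0 := by
    rw [← hlin, hT]
    exact Finset.add_sum_erase _ (fun i => a i • v i) (Finset.mem_univ 0)
  have hsumT : ∑ i ∈ T, a i = 1 - a 0 := by
    have h := Finset.add_sum_erase Finset.univ a (Finset.mem_univ 0)
    rw [← hT, hsum] at h
    linarith
  set S := affineSpan ℝ (v '' {i : Fin (d + 1) | i ≠ 0}) with hS
  have hv0S : v 0 ∉ S := by
    have h := hv.notMem_affineSpan_diff 0 Set.univ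
    have himg : v '' (Set.univ \ {0}) = v '' {i : Fin (d + 1) | i ≠ 0} := by
      have : (Set.univ \ {0} : Set (Fin (d + 1))) = {i : Fin (d + 1) | i ≠ 0} := by
        ext i; simp
      rw [this]
    rwa [himg] at h
  have hviS : ∀ i : Fin (d + 1), i ≠ 0 → v i ∈ S :=
    fun i hi => subset_affineSpan ℝ _ ⟨i, hi, rfl⟩
  -- the zero-th barycentric coordinate of `w 0` cannot vanish
  have ha0_ne : a 0 ≠ 0 := by
    intro h0
    have hsumT1 : ∑ i ∈ T, a i = 1 := by rw [hsumT, h0]; ring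
    have hw0 : w 0 = ∑ i ∈ T, a i • v i := by
      rw [← hsplit, h0, zero_smul, zero_add]
    have hw0S : w 0 ∈ S := by
      have hmem : T.affineCombination ℝ v a ∈ S :=
        affineCombination_mem_of_mem S T v a hsumT1
          (fun i hi => hviS i (Finset.mem_erase.mp hi).1)
      rwa [Finset.affineCombination_eq_linear_combination _ _ _ hsumT1, ← hw0] at hmem
    have hle : affineSpan ℝ (Set.range w) ≤ S := by
      rw [affineSpan_le]
      rintro x ⟨i, rfl⟩
      by_cases hi : i = 0
      · rw [hi]; exact hw0S
      · rw [hshare i hi]; exact hviS i hi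
    rw [hwtop] at hle
    exact hv0S (hle trivial)
  -- the zero-th barycentric coordinate of `w 0` cannot be positive
  have ha0_nonpos : ¬0 < a 0 := by
    intro hpos
    set c := T.centroid ℝ v with hc
    have hcw : T.centroid ℝ w = c := by
      rw [hc, Finset.centroid, Finset.centroid]
      exact Finset.affineCombination_congr T (fun i _ => rfl)
        (fun i hi => hshare i (Finset.mem_erase.mp hi).1)
    have hsumcw : ∑ i ∈ T, T.centroidWeights ℝ i = 1 :=
      T.sum_centroidWeights_eq_one_of_nonempty ℝ hTne
    have hdinv : (0 : ℝ) < (d : ℝ)⁻¹ := by positivity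
    -- coordinates of the centroid
    have hcv0 : bv.coord 0 c = 0 := by
      rw [hc, Finset.centroid]
      exact bv.coord_apply_combination_of_notMem h0T hsumcw
    have hcvi : ∀ i ∈ T, bv.coord i c = (d : ℝ)⁻¹ := by
      intro i hi
      have h := bv.coord_apply_centroid (s := T) hi
      rwa [hbvc, ← hc, hcardT] at h
    have hcw0 : bw.coord 0 c = 0 := by
      rw [← hcw, Finset.centroid]
      exact bw.coord_apply_combination_of_notMem h0T hsumcw
    have hcwi : ∀ i ∈ T, bw.coord i c = (d : ℝ)⁻¹ := by
      intro i hi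
      have h := bw.coord_apply_centroid (s := T) hi
      rwa [hbwc, hcw, hcardT] at h
    -- choose a small parameter t
    set K : ℝ := 1 + ∑ i, |a i - (d : ℝ)⁻¹| with hK
    have hKpos : 0 < K := by
      have hs : (0 : ℝ) ≤ ∑ i, |a i - (d : ℝ)⁻¹| :=
        Finset.sum_nonneg fun i _ => abs_nonneg _
      rw [hK]
      linarith
    set t : ℝ := min (1 / 2) ((d : ℝ)⁻¹ / (2 * K)) with ht
    have ht0 : 0 < t := lt_min (by norm_num) (div_pos hdinv (by linarith))
    have ht1 : t < 1 := lt_of_le_of_lt (min_le_left _ _) (by norm_num)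
    have hbound : ∀ j : Fin (d + 1), t * |a j - (d : ℝ)⁻¹| < (d : ℝ)⁻¹ := by
      intro j
      have h1 : |a j - (d : ℝ)⁻¹| ≤ K - 1 := by
        rw [hK]
        have h1' := Finset.single_le_sum (f := fun i => |a i - (d : ℝ)⁻¹|)
          (fun i _ => abs_nonneg _) (Finset.mem_univ j)
        beta_reduce at h1'
        linarith
      have h2 : t ≤ (d : ℝ)⁻¹ / (2 * K) := min_le_right _ _
      have h3 : t * |a j - (d : ℝ)⁻¹| ≤ ((d : ℝ)⁻¹ / (2 * K)) * K := by
        apply mul_le_mul h2 (by linarith) (abs_nonneg _) (div_pos hdinv (by linarith)).le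
      have h4 : ((d : ℝ)⁻¹ / (2 * K)) * K = (d : ℝ)⁻¹ / 2 := by
        field_simp
      rw [h4] at h3
      linarith
    set x := AffineMap.lineMap c (w 0) t with hx
    have hxv : x ∈ interior (convexHull ℝ (Set.range v)) := by
      rw [← hbvc, bv.interior_convexHull]
      intro i
      have hcoord : bv.coord i x = (1 - t) * bv.coord i c + t * a i := by
        rw [hx, AffineMap.apply_lineMap, AffineMap.lineMap_apply_module, smul_eq_mul, smul_eq_mul]
      by_cases hi : i = 0
      · subst hi
        rw [hcoord, hcv0]
        nlinarith [mul_pos ht0 hpos]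
      · rw [hcoord, hcvi i (hmemT i hi)]
        have hb := hbound i
        have hz : t * -(|a i - (d : ℝ)⁻¹|) ≤ t * (a i - (d : ℝ)⁻¹) :=
          mul_le_mul_of_nonneg_left (neg_abs_le _) ht0.le
        nlinarith [hb, hz]
    have hxw : x ∈ interior (convexHull ℝ (Set.range w)) := by
      rw [← hbwc, bw.interior_convexHull]
      intro i
      have hcoord : bw.coord i x = (1 - t) * bw.coord i c + t * bw.coord i (w 0) := by
        rw [hx, AffineMap.apply_lineMap, AffineMap.lineMap_apply_module, smul_eq_mul, smul_eq_mul]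
      by_cases hi : i = 0
      · subst hi
        have hw1 : bw.coord 0 (w 0) = 1 := bw.coord_apply_eq 0
        rw [hcoord, hcw0, hw1]
        nlinarith [ht0]
      · have hw2 : bw.coord i (w 0) = 0 := bw.coord_apply_ne hi
        rw [hcoord, hcwi i (hmemT i hi), hw2]
        nlinarith [mul_pos (show (0:ℝ) < 1 - t by linarith) hdinv]
    exact Set.disjoint_left.mp hdisj hxv hxw
  have ha0neg : a 0 < 0 := lt_of_le_of_ne (not_lt.mp ha0_nonpos) ha0_ne
  -- build the point `p` on the hyperplane such that `w 0 = lineMap p (v 0) (a 0)`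
  have hrpos : (0 : ℝ) < 1 - a 0 := by linarith
  have hrne : (1 : ℝ) - a 0 ≠ 0 := ne_of_gt hrpos
  set wt : Fin (d + 1) → ℝ := fun i => a i / (1 - a 0) with hwt
  have hwtsum : ∑ i ∈ T, wt i = 1 := by
    rw [hwt]
    rw [← Finset.sum_div, hsumT, div_self hrne]
  set p := T.affineCombination ℝ v wt with hp
  have hpS : p ∈ S :=
    affineCombination_mem_of_mem S T v wt hwtsum
      (fun i hi => hviS i (Finset.mem_erase.mp hi).1)
  have hplin : p = ∑ i ∈ T, wt i • v i := by
    rw [hp, Finset.affineCombination_eq_linear_combination _ _ _ hwtsum]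
  have hkey : w 0 = AffineMap.lineMap p (v 0) (a 0) := by
    rw [AffineMap.lineMap_apply_module, hplin, Finset.smul_sum]
    have hterm : ∀ i ∈ T, (1 - a 0) • (wt i • v i) = a i • v i := by
      intro i _
      rw [smul_smul, hwt]
      congr 1
      field_simp
    rw [Finset.sum_congr rfl hterm, ← hsplit]
    abel
  rw [hkey]
  exact AffineSubspace.sOppSide_lineMap_left hpS hv0S ha0neg
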